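/- Let π = N(0, ϑ I_d) be a centered Gaussian measure on ℝ^d with ϑ > 0, and let θ* ∈ ℝ^d with ‖θ*‖₂ ≤ 1. Then for every δ > 0: log π({θ: ‖θ−θ*‖₂ < δ}) ≥ d · log( (δ/(2√(2πϑd))) · exp( −1/ϑ − δ²/(ϑd) ) ). -/

import Mathlib

set_option autoImplicit false
set_option maxHeartbeats 1000000

open MeasureTheory ProbabilityTheory

/-- The Euclidean norm on `ℝ^d`. -/
noncomputable def eNorm {d : ℕ} (θ : Fin d → ℝ) : ℝ :=
  Real.sqrt (∑ i, θ i ^ 2)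

theorem statement16
    (d : ℕ) (hd : 0 < d)
    (ϑ : NNReal) (hϑ : 0 < ϑ)
    (θstar : Fin d → ℝ) (hθstar : eNorm θstar ≤ 1)
    (δ : ℝ) (hδ : 0 < δ) :
    (d : ℝ) * Real.log (δ / (2 * Real.sqrt (2 * Real.pi * (ϑ : ℝ) * d)) *
        Real.exp (-(1 / (ϑ : ℝ)) - δ ^ 2 / ((ϑ : ℝ) * d)))
      ≤ Real.log
          (((Measure.pi fun _ : Fin d => gaussianReal 0 ϑ)
            {θ | eNorm (θ - θstar) < δ}).toReal) := by
  haveI : Nonempty (Fin d) := ⟨⟨0, hd⟩⟩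
  have hϑ' : (0 : ℝ) < (ϑ : ℝ) := hϑ
  have hd' : (0 : ℝ) < (d : ℝ) := by exact_mod_cast hd
  have hsd : (0 : ℝ) < Real.sqrt d := Real.sqrt_pos.mpr hd'
  set r : ℝ := δ / Real.sqrt d with hr_def
  have hr : 0 < r := div_pos hδ hsd
  have hr2 : r ^ 2 = δ ^ 2 / d := by
    rw [hr_def, div_pow, Real.sq_sqrt hd'.le]
  set E : ℝ := Real.exp (-(1 / (ϑ : ℝ)) - δ ^ 2 / ((ϑ : ℝ) * d)) with hE_def
  have hE : 0 < E := Real.exp_pos _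
  set A : ℝ := δ / (2 * Real.sqrt (2 * Real.pi * (ϑ : ℝ) * d)) * E with hA_def
  have h2πϑ : (0 : ℝ) < 2 * Real.pi * (ϑ : ℝ) :=
    mul_pos (mul_pos two_pos Real.pi_pos) hϑ'
  have hs2πϑ : (0 : ℝ) < Real.sqrt (2 * Real.pi * (ϑ : ℝ)) := Real.sqrt_pos.mpr h2πϑ
  have hA : 0 < A := by
    apply mul_pos _ hE
    apply div_pos hδ
    apply mul_pos two_pos
    exact Real.sqrt_pos.mpr (mul_pos h2πϑ hd')
  set c : ℝ := (Real.sqrt (2 * Real.pi * (ϑ : ℝ)))⁻¹ * E with hc_def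
  have hc : 0 < c := mul_pos (inv_pos.mpr hs2πϑ) hE
  -- A ≤ 2 r c
  have hA_le : A ≤ 2 * r * c := by
    have hsqrt : Real.sqrt (2 * Real.pi * (ϑ : ℝ) * d)
        = Real.sqrt (2 * Real.pi * (ϑ : ℝ)) * Real.sqrt d :=
      Real.sqrt_mul h2πϑ.le d
    have h4 : 2 * (δ / Real.sqrt d) * ((Real.sqrt (2 * Real.pi * (ϑ : ℝ)))⁻¹ * E)
        = 4 * (δ / (2 * (Real.sqrt (2 * Real.pi * (ϑ : ℝ)) * Real.sqrt d)) * E) := by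
      field_simp
      ring
    rw [hA_def, hc_def, hr_def, hsqrt, h4]
    nlinarith [(by positivity : (0:ℝ) < δ / (2 * (Real.sqrt (2 * Real.pi * (ϑ : ℝ)) * Real.sqrt d)) * E)]
  -- sum of squares of θstar is ≤ 1
  have hsum1 : ∑ i, θstar i ^ 2 ≤ 1 := by
    have h0 : (0 : ℝ) ≤ ∑ i, θstar i ^ 2 := Finset.sum_nonneg fun i _ => sq_nonneg _
    have h1 := Real.sq_sqrt h0
    unfold eNorm at hθstar
    nlinarith [hθstar, Real.sqrt_nonneg (∑ i, θstar i ^ 2)]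
  have ha2 : ∀ i, (θstar i) ^ 2 ≤ 1 := fun i =>
    le_trans (Finset.single_le_sum (fun j _ => sq_nonneg (θstar j)) (Finset.mem_univ i)) hsum1
  -- per-coordinate lower bound
  have key : ∀ i : Fin d, ENNReal.ofReal A
      ≤ gaussianReal 0 ϑ (Set.Ioo (θstar i - r) (θstar i + r)) := by
    intro i
    rw [gaussianReal_apply 0 hϑ.ne' _]
    have hpoint : ∀ x ∈ Set.Ioo (θstar i - r) (θstar i + r),
        ENNReal.ofReal c ≤ gaussianPDF 0 ϑ x := by
      intro x hx
      rw [gaussianPDF]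
      apply ENNReal.ofReal_le_ofReal
      rw [gaussianPDFReal]
      simp only [sub_zero]
      rw [hc_def]
      gcongr
      · rw [hE_def]
        apply Real.exp_le_exp.mpr
        have hx2 : x ^ 2 ≤ 2 + 2 * (δ ^ 2 / d) := by
          obtain ⟨h1, h2⟩ := hx
          have h3 : (x - θstar i) ^ 2 ≤ r ^ 2 := by nlinarith
          nlinarith [ha2 i, h3, hr2, sq_nonneg (x - 2 * θstar i)]
        rw [le_div_iff₀ (by positivity : (0:ℝ) < 2 * (ϑ : ℝ))]
        have e3 : (-(1 / (ϑ : ℝ)) - δ ^ 2 / ((ϑ : ℝ) * d)) * (2 * (ϑ : ℝ))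
            = -2 - 2 * (δ ^ 2 / (d : ℝ)) := by
          field_simp
        rw [e3]
        linarith [hx2]
    calc ENNReal.ofReal A ≤ ENNReal.ofReal (c * (2 * r)) := by
          apply ENNReal.ofReal_le_ofReal; nlinarith
      _ = ENNReal.ofReal c * ENNReal.ofReal (2 * r) :=
          ENNReal.ofReal_mul hc.le
      _ = ENNReal.ofReal c * volume (Set.Ioo (θstar i - r) (θstar i + r)) := by
          rw [Real.volume_Ioo]; congr 1; ring_nf
      _ = ∫⁻ _ in Set.Ioo (θstar i - r) (θstar i + r), ENNReal.ofReal c := by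
          rw [setLIntegral_const, mul_comm]
      _ ≤ ∫⁻ x in Set.Ioo (θstar i - r) (θstar i + r), gaussianPDF 0 ϑ x :=
          setLIntegral_mono (measurable_gaussianPDF 0 ϑ) hpoint
  -- cube inside the ball
  have hsubset : (Set.univ.pi fun i => Set.Ioo (θstar i - r) (θstar i + r))
      ⊆ {θ : Fin d → ℝ | eNorm (θ - θstar) < δ} := by
    intro θ hθ
    simp only [Set.mem_setOf_eq, eNorm]
    rw [Real.sqrt_lt' hδ]
    have hterm : ∀ i : Fin d, ((θ - θstar) i) ^ 2 < r ^ 2 := by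
      intro i
      have := hθ i (Set.mem_univ i)
      obtain ⟨h1, h2⟩ := this
      have : (θ - θstar) i = θ i - θstar i := rfl
      rw [this]
      exact sq_lt_sq' (by linarith) (by linarith)
    calc ∑ i, ((θ - θstar) i) ^ 2 < ∑ _i : Fin d, r ^ 2 :=
          Finset.sum_lt_sum_of_nonempty Finset.univ_nonempty fun i _ => hterm i
      _ = d * r ^ 2 := by rw [Finset.sum_const, Finset.card_univ, Fintype.card_fin,
          nsmul_eq_mul]
      _ = δ ^ 2 := by rw [hr2]; field_simp
  -- measure lower bound
  have hmain : ENNReal.ofReal (A ^ d)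
      ≤ (Measure.pi fun _ : Fin d => gaussianReal 0 ϑ) {θ | eNorm (θ - θstar) < δ} := by
    calc ENNReal.ofReal (A ^ d) = (ENNReal.ofReal A) ^ d := ENNReal.ofReal_pow hA.le d
      _ = ∏ _i : Fin d, ENNReal.ofReal A := by
          rw [Finset.prod_const, Finset.card_univ, Fintype.card_fin]
      _ ≤ ∏ i : Fin d, gaussianReal 0 ϑ (Set.Ioo (θstar i - r) (θstar i + r)) :=
          Finset.prod_le_prod (fun _ _ => zero_le) (fun i _ => key i)
      _ = (Measure.pi fun _ : Fin d => gaussianReal 0 ϑ)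
            (Set.univ.pi fun i => Set.Ioo (θstar i - r) (θstar i + r)) :=
          (Measure.pi_pi _ _).symm
      _ ≤ _ := measure_mono hsubset
  have hfin : (Measure.pi fun _ : Fin d => gaussianReal 0 ϑ) {θ | eNorm (θ - θstar) < δ} ≠ ⊤ :=
    (measure_lt_top _ _).ne
  have hAd : A ^ d ≤ ((Measure.pi fun _ : Fin d => gaussianReal 0 ϑ)
      {θ | eNorm (θ - θstar) < δ}).toReal :=
    (ENNReal.ofReal_le_iff_le_toReal hfin).mp hmain
  calc (d : ℝ) * Real.log A = Real.log (A ^ d) := by rw [Real.log_pow]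
    _ ≤ _ := Real.log_le_log (pow_pos hA d) hAd
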